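/- For integers 1 ≤ s ≤ N/4, the ratio C(N,s) / (2^s C(N-s, ⌊s/2⌋)) is at least (N/(4s))^{s/2}. -/

import Mathlib

open Finset

/-- `C(n,m)/n^m` is monotone in `n`, descFactorial version. -/
lemma descFactorial_pow_le {s N m : ℕ} (hsN : s ≤ N) :
    N ^ m * s.descFactorial m ≤ s ^ m * N.descFactorial m := by
  have hab : ∀ a b : ℕ, a ^ m * ∏ i ∈ range m, (b - i) = ∏ i ∈ range m, (a * (b - i)) := by
    intro a b
    rw [Finset.prod_mul_distrib, Finset.prod_const, Finset.card_range]
  rw [Nat.descFactorial_eq_prod_range, Nat.descFactorial_eq_prod_range, hab, hab]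
  apply Finset.prod_le_prod'
  intro i _
  rcases le_or_gt s i with h | h
  · simp [Nat.sub_eq_zero_of_le h]
  · have h1 : N * (s - i) = N * s - N * i := Nat.mul_sub N s i
    have h2 : s * (N - i) = s * N - s * i := Nat.mul_sub s N i
    have h3 : s * i ≤ N * i := Nat.mul_le_mul_right i hsN
    have h4 : s * N = N * s := Nat.mul_comm s N
    omega

lemma choose_pow_le {s N m : ℕ} (hsN : s ≤ N) :
    N ^ m * s.choose m ≤ s ^ m * N.choose m := by
  have hdesc := descFactorial_pow_le (m := m) hsN
  rw [Nat.descFactorial_eq_factorial_mul_choose,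
    Nat.descFactorial_eq_factorial_mul_choose] at hdesc
  have hf : 0 < m.factorial := Nat.factorial_pos m
  have h1 : m.factorial * (N ^ m * s.choose m) ≤ m.factorial * (s ^ m * N.choose m) := by
    calc m.factorial * (N ^ m * s.choose m)
        = N ^ m * (m.factorial * s.choose m) := by ring
      _ ≤ s ^ m * (m.factorial * N.choose m) := hdesc
      _ = m.factorial * (s ^ m * N.choose m) := by ring
  exact Nat.le_of_mul_le_mul_left h1 hf

/-- Key natural-number inequality: `N^m * C(N-s, k) ≤ C(N,s) * s^m` where
`k = s/2`, `m = s - k`. -/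
lemma key_nat {N s : ℕ} (hs1 : 1 ≤ s) (hs : 4 * s ≤ N) :
    N ^ (s - s / 2) * (N - s).choose (s / 2) ≤ N.choose s * s ^ (s - s / 2) := by
  set k := s / 2 with hk
  set m := s - k with hm
  have hms : m ≤ s := by omega
  have hsN : s ≤ N := by omega
  have htri : N.choose s * s.choose m = N.choose m * (N - m).choose k := by
    have h := Nat.choose_mul (n := N) (k := s) (s := m) hms
    rwa [show s - m = k by omega] at h
  have hchoosem : 0 < s.choose m := Nat.choose_pos hms
  have h1 : (N - s).choose k ≤ (N - m).choose k :=
    Nat.choose_le_choose k (by omega)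
  have h2 : N ^ m * s.choose m ≤ s ^ m * N.choose m := choose_pow_le hsN
  have hmain : N ^ m * (N - s).choose k * s.choose m ≤ N.choose s * s ^ m * s.choose m := by
    calc N ^ m * (N - s).choose k * s.choose m
        = (N ^ m * s.choose m) * (N - s).choose k := by ring
      _ ≤ (s ^ m * N.choose m) * (N - m).choose k := Nat.mul_le_mul h2 h1
      _ = s ^ m * (N.choose m * (N - m).choose k) := by ring
      _ = s ^ m * (N.choose s * s.choose m) := by rw [htri]
      _ = N.choose s * s ^ m * s.choose m := by ring
  exact Nat.le_of_mul_le_mul_right hmain hchoosem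

/-- For `1 ≤ s ≤ N/4`, the ratio `C(N,s) / (2^s C(N-s, ⌊s/2⌋))` is at least
`(N/(4s))^{s/2}`. -/
theorem choose_ratio_ge {N s : ℕ} (hs1 : 1 ≤ s) (hs : 4 * s ≤ N) :
    ((N : ℝ) / (4 * s)) ^ ((s : ℝ) / 2) ≤
      (N.choose s : ℝ) / (2 ^ s * ((N - s).choose (s / 2) : ℝ)) := by
  set k := s / 2 with hk
  set m := s - k with hm
  have hs0 : (0:ℝ) < s := by exact_mod_cast hs1
  have hN0 : (0:ℝ) < N := by
    have : 0 < N := by omega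
    exact_mod_cast this
  have hcast : 4 * (s:ℝ) ≤ N := by exact_mod_cast hs
  have hb : (1:ℝ) ≤ (N:ℝ) / (4 * s) := by
    rw [le_div_iff₀ (by positivity)]
    linarith
  have hexp : (s:ℝ) / 2 ≤ (m:ℝ) := by
    rw [div_le_iff₀ (by norm_num)]
    exact_mod_cast (show s ≤ m * 2 by omega)
  have hCpos : (0:ℝ) < ((N - s).choose k : ℝ) := by
    exact_mod_cast Nat.choose_pos (show k ≤ N - s by omega)
  have hkey : ((N:ℝ)) ^ m * ((N - s).choose k : ℝ) ≤ (N.choose s : ℝ) * (s:ℝ) ^ m := by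
    exact_mod_cast key_nat hs1 hs
  calc ((N : ℝ) / (4 * s)) ^ ((s : ℝ) / 2)
      ≤ ((N : ℝ) / (4 * s)) ^ ((m : ℕ) : ℝ) :=
        Real.rpow_le_rpow_of_exponent_le hb hexp
    _ = ((N : ℝ) / (4 * s)) ^ m := Real.rpow_natCast _ m
    _ = (N:ℝ) ^ m / ((4 * s : ℝ)) ^ m := div_pow _ _ m
    _ ≤ (N:ℝ) ^ m / (2 ^ s * (s:ℝ) ^ m) := by
        apply div_le_div_of_nonneg_left (by positivity) (by positivity)
        calc (2:ℝ) ^ s * (s:ℝ) ^ m ≤ (2:ℝ) ^ (2 * m) * (s:ℝ) ^ m := by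
              apply mul_le_mul_of_nonneg_right _ (by positivity)
              exact pow_le_pow_right₀ (by norm_num) (by omega)
          _ = ((4:ℝ)) ^ m * (s:ℝ) ^ m := by
              rw [pow_mul]; norm_num
          _ = ((4 * s : ℝ)) ^ m := by rw [mul_pow]
    _ ≤ (N.choose s : ℝ) / (2 ^ s * ((N - s).choose k : ℝ)) := by
        rw [div_le_div_iff₀ (by positivity) (by positivity)]
        calc (N:ℝ) ^ m * (2 ^ s * ((N - s).choose k : ℝ))
            = 2 ^ s * ((N:ℝ) ^ m * ((N - s).choose k : ℝ)) := by ring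
          _ ≤ 2 ^ s * ((N.choose s : ℝ) * (s:ℝ) ^ m) := by
              apply mul_le_mul_of_nonneg_left hkey (by positivity)
          _ = (N.choose s : ℝ) * (2 ^ s * (s:ℝ) ^ m) := by ring
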